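/- arXiv:2502.15667 — 2 statements merged into one kernel-verified Lean document; each statement's English description precedes it below -/
import Mathlib

section
/- For any positive definite matrices P, Q ∈ ℝ^{n×n} and any matrices R, X ∈ ℝ^{n×n}, the matrix (I − X R) P (I − X R)ᵀ + X Q Xᵀ is positive definite, and moreover it is bounded below (in the Loewner order) by (P⁻¹ + Rᵀ Q⁻¹ R)⁻¹. -/
open Matrix

theorem stmt_3 {n : ℕ} (P Q R X : Matrix (Fin n) (Fin n) ℝ)
    (hP : P.PosDef) (hQ : Q.PosDef) :
    ((1 - X * R) * P * (1 - X * R)ᵀ + X * Q * Xᵀ).PosDef ∧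
    ((1 - X * R) * P * (1 - X * R)ᵀ + X * Q * Xᵀ
      - (P⁻¹ + Rᵀ * Q⁻¹ * R)⁻¹).PosSemidef := by
  have hct : ∀ A : Matrix (Fin n) (Fin n) ℝ, Aᴴ = Aᵀ := fun A =>
    conjTranspose_eq_transpose_of_trivial A
  have hPt : Pᵀ = P := by rw [← hct]; exact hP.isHermitian
  have hQt : Qᵀ = Q := by rw [← hct]; exact hQ.isHermitian
  set M := Q + R * P * Rᵀ with hMdef
  have hM : M.PosDef := by
    have := hP.posSemidef.mul_mul_conjTranspose_same R
    rw [hct] at this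
    exact hQ.add_posSemidef this
  have hMt : Mᵀ = M := by
    simp [hMdef, transpose_add, transpose_mul, hPt, hQt, Matrix.mul_assoc]
  have hMit : (M⁻¹)ᵀ = M⁻¹ := by rw [transpose_nonsing_inv, hMt]
  have hS : (P⁻¹ + Rᵀ * Q⁻¹ * R).PosDef := by
    have := hQ.inv.posSemidef.conjTranspose_mul_mul_same R
    rw [hct] at this
    exact hP.inv.add_posSemidef this
  set S := P⁻¹ + Rᵀ * Q⁻¹ * R with hSdef
  have dP : IsUnit P.det := hP.det_pos.ne'.isUnit
  have dQ : IsUnit Q.det := hQ.det_pos.ne'.isUnit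
  have dM : IsUnit M.det := hM.det_pos.ne'.isUnit
  have dS : IsUnit S.det := hS.det_pos.ne'.isUnit
  have cP : P⁻¹ * P = 1 := Matrix.nonsing_inv_mul _ dP
  have cP' : P * P⁻¹ = 1 := Matrix.mul_nonsing_inv _ dP
  have cQ : Q⁻¹ * Q = 1 := Matrix.nonsing_inv_mul _ dQ
  have cQ' : Q * Q⁻¹ = 1 := Matrix.mul_nonsing_inv _ dQ
  have cM : M⁻¹ * M = 1 := Matrix.nonsing_inv_mul _ dM
  have cM' : M * M⁻¹ = 1 := Matrix.mul_nonsing_inv _ dM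
  have cS : S⁻¹ * S = 1 := Matrix.nonsing_inv_mul _ dS
  have cS' : S * S⁻¹ = 1 := Matrix.mul_nonsing_inv _ dS
  have cPl : ∀ A : Matrix (Fin n) (Fin n) ℝ, P⁻¹ * (P * A) = A := fun A => by
    rw [← Matrix.mul_assoc, cP, Matrix.one_mul]
  have cQl : ∀ A : Matrix (Fin n) (Fin n) ℝ, Q⁻¹ * (Q * A) = A := fun A => by
    rw [← Matrix.mul_assoc, cQ, Matrix.one_mul]
  have cMl : ∀ A : Matrix (Fin n) (Fin n) ℝ, M⁻¹ * (M * A) = A := fun A => by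
    rw [← Matrix.mul_assoc, cM, Matrix.one_mul]
  have cMl' : ∀ A : Matrix (Fin n) (Fin n) ℝ, M * (M⁻¹ * A) = A := fun A => by
    rw [← Matrix.mul_assoc, cM', Matrix.one_mul]
  have cSl : ∀ A : Matrix (Fin n) (Fin n) ℝ, S⁻¹ * (S * A) = A := fun A => by
    rw [← Matrix.mul_assoc, cS, Matrix.one_mul]
  -- step 1 : S * (P * Rᵀ) = Rᵀ * Q⁻¹ * M
  have h2 : S * (P * Rᵀ) = Rᵀ * Q⁻¹ * M := by
    rw [hSdef, hMdef]
    simp only [add_mul, mul_add, Matrix.mul_assoc, cPl, cQl, cP, cQ, Matrix.mul_one]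
  -- step 2 : P * Rᵀ * M⁻¹ = S⁻¹ * (Rᵀ * Q⁻¹)
  have h3 : P * Rᵀ * M⁻¹ = S⁻¹ * (Rᵀ * Q⁻¹) := by
    have : P * Rᵀ = S⁻¹ * (Rᵀ * Q⁻¹ * M) := by rw [← h2, cSl]
    rw [this]
    simp only [Matrix.mul_assoc, cM', Matrix.mul_one]
  -- step 3 : Woodbury
  have h4 : S⁻¹ = P - P * Rᵀ * M⁻¹ * (R * P) := by
    have hSP : S * P = 1 + Rᵀ * Q⁻¹ * (R * P) := by
      rw [hSdef, add_mul, cP, Matrix.mul_assoc]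
    have : P = S⁻¹ + P * Rᵀ * M⁻¹ * (R * P) := by
      calc P = S⁻¹ * (S * P) := (cSl P).symm
        _ = S⁻¹ + S⁻¹ * (Rᵀ * Q⁻¹) * (R * P) := by
            rw [hSP, mul_add, Matrix.mul_one]
            simp only [Matrix.mul_assoc]
        _ = S⁻¹ + P * Rᵀ * M⁻¹ * (R * P) := by rw [← h3]
    exact eq_sub_of_add_eq this.symm
  -- key identity
  have key : (1 - X * R) * P * (1 - X * R)ᵀ + X * Q * Xᵀ
      = S⁻¹ + (X - P * Rᵀ * M⁻¹) * M * (X - P * Rᵀ * M⁻¹)ᵀ := by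
    rw [h4]
    simp only [transpose_sub, transpose_mul, transpose_one, transpose_transpose, hPt, hMit]
    simp only [Matrix.sub_mul, Matrix.mul_sub, Matrix.one_mul, Matrix.mul_one,
      Matrix.mul_assoc, cMl, cMl']
    rw [hMdef]
    noncomm_ring
  refine ⟨?_, ?_⟩
  · rw [key]
    have hprod : ((X - P * Rᵀ * M⁻¹) * M * (X - P * Rᵀ * M⁻¹)ᵀ).PosSemidef := by
      have := hM.posSemidef.mul_mul_conjTranspose_same (X - P * Rᵀ * M⁻¹)
      rwa [hct] at this
    exact hS.inv.add_posSemidef hprod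
  · rw [key, add_sub_cancel_left]
    have := hM.posSemidef.mul_mul_conjTranspose_same (X - P * Rᵀ * M⁻¹)
    rwa [hct] at this
end

section
/- For any positive semidefinite matrices Mₜ ∈ ℝ^{k×k} (t = 0,…,N−1), vectors wₜ ∈ ℝ^{m}, matrices Pₜ ∈ ℝ^{n×n} positive definite, if Σₜ wₜwₜᵀ is positive definite and each Pₜ is positive definite, then Σₜ (wₜwₜᵀ ⊗ Pₜ) is positive definite. -/
open Matrix

lemma swap3 {α β γ : Type*} [Fintype α] [Fintype β] [Fintype γ] (f : α → β → γ → ℝ) :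
    ∑ a, ∑ b, ∑ c, f a b c = ∑ c, ∑ b, ∑ a, f a b c := by
  calc ∑ a, ∑ b, ∑ c, f a b c
      = ∑ a, ∑ c, ∑ b, f a b c := Finset.sum_congr rfl fun a _ => Finset.sum_comm
    _ = ∑ c, ∑ a, ∑ b, f a b c := Finset.sum_comm
    _ = ∑ c, ∑ b, ∑ a, f a b c := Finset.sum_congr rfl fun c _ => Finset.sum_comm

lemma rot3 {α β γ : Type*} [Fintype α] [Fintype β] [Fintype γ] (f : α → β → γ → ℝ) :
    ∑ a, ∑ b, ∑ c, f a b c = ∑ c, ∑ a, ∑ b, f a b c :=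
  (Finset.sum_congr rfl fun _ _ => Finset.sum_comm).trans Finset.sum_comm

lemma swap4 {α β γ δ : Type*} [Fintype α] [Fintype β] [Fintype γ] [Fintype δ]
    (f : α → β → γ → δ → ℝ) :
    ∑ a, ∑ b, ∑ c, ∑ d, f a b c d = ∑ b, ∑ d, ∑ c, ∑ a, f a b c d := by
  calc ∑ a, ∑ b, ∑ c, ∑ d, f a b c d
      = ∑ b, ∑ a, ∑ c, ∑ d, f a b c d := Finset.sum_comm
    _ = ∑ b, ∑ d, ∑ c, ∑ a, f a b c d := Finset.sum_congr rfl fun b _ => swap3 _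

lemma quad_kron {m n : ℕ} (w : Fin m → ℝ) (P : Matrix (Fin n) (Fin n) ℝ)
    (x : Fin m × Fin n → ℝ) :
    x ⬝ᵥ (Matrix.kroneckerMap (· * ·) (Matrix.vecMulVec w w) P) *ᵥ x =
      (fun j => ∑ i, w i * x (i, j)) ⬝ᵥ P *ᵥ (fun j => ∑ i, w i * x (i, j)) := by
  simp only [dotProduct, Matrix.mulVec, Matrix.kroneckerMap, Matrix.vecMulVec,
    Matrix.of_apply, Fintype.sum_prod_type, Finset.mul_sum, Finset.sum_mul]
  refine (swap4 fun a b c d => x (a, b) * (w a * w c * P b d * x (c, d))).trans ?_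
  refine Finset.sum_congr rfl fun j _ => ?_
  refine Finset.sum_congr rfl fun j' _ => ?_
  refine Finset.sum_congr rfl fun i' _ => ?_
  refine Finset.sum_congr rfl fun i _ => ?_
  ring


lemma dot_sum_mulVec {ι α : Type*} [Fintype ι] [Fintype α] (A : ι → Matrix α α ℝ)
    (x : α → ℝ) : x ⬝ᵥ (∑ t, A t) *ᵥ x = ∑ t, x ⬝ᵥ (A t) *ᵥ x := by
  simp only [dotProduct, Matrix.mulVec, Matrix.sum_apply, Finset.sum_mul,
    Finset.mul_sum]
  exact rot3 fun p q t => x p * (A t p q * x q)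

theorem stmt_11 {N m n k : ℕ}
    (M : Fin N → Matrix (Fin k) (Fin k) ℝ)
    (hM : ∀ t, (M t).PosSemidef)
    (w : Fin N → Fin m → ℝ)
    (P : Fin N → Matrix (Fin n) (Fin n) ℝ)
    (hw : (∑ t : Fin N, Matrix.vecMulVec (w t) (w t)).PosDef)
    (hP : ∀ t, (P t).PosDef) :
    (∑ t : Fin N,
      Matrix.kroneckerMap (· * ·) (Matrix.vecMulVec (w t) (w t)) (P t)).PosDef := by
  refine posDef_iff_dotProduct_mulVec.mpr ⟨?_, ?_⟩
  · -- Hermitian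
    unfold Matrix.IsHermitian
    ext ⟨i, j⟩ ⟨i', j'⟩
    simp only [Matrix.conjTranspose_apply, Matrix.sum_apply, star_sum, Matrix.kroneckerMap,
      Matrix.vecMulVec, Matrix.of_apply, star_trivial]
    refine Finset.sum_congr rfl fun t _ => ?_
    have h := congrFun (congrFun (hP t).isHermitian j) j'
    simp only [Matrix.conjTranspose_apply, star_trivial] at h
    rw [← h]; ring
  · intro x hx
    have hterm : ∀ t : Fin N,
        x ⬝ᵥ (Matrix.kroneckerMap (· * ·) (Matrix.vecMulVec (w t) (w t)) (P t)) *ᵥ x =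
        (fun j => ∑ i, w t i * x (i, j)) ⬝ᵥ (P t) *ᵥ (fun j => ∑ i, w t i * x (i, j)) :=
      fun t => quad_kron (w t) (P t) x
    have hnn : ∀ t : Fin N,
        0 ≤ x ⬝ᵥ (Matrix.kroneckerMap (· * ·) (Matrix.vecMulVec (w t) (w t)) (P t)) *ᵥ x := by
      intro t
      rw [hterm t]
      have := (hP t).posSemidef.dotProduct_mulVec_nonneg (fun j => ∑ i, w t i * x (i, j))
      simpa using this
    obtain ⟨i₀, j₀, hx0⟩ : ∃ i j, x (i, j) ≠ 0 := by
      by_contra h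
      push_neg at h
      exact hx (funext fun p => h p.1 p.2)
    set u : Fin m → ℝ := fun i => x (i, j₀) with hu
    have hu0 : u ≠ 0 := fun h => hx0 (congrFun h i₀)
    have hpos := hw.dotProduct_mulVec_pos hu0
    have hqu : (star u) ⬝ᵥ (∑ t : Fin N, Matrix.vecMulVec (w t) (w t)) *ᵥ u =
        ∑ t : Fin N, (∑ i, w t i * u i) ^ 2 := by
      rw [star_trivial, dot_sum_mulVec]
      refine Finset.sum_congr rfl fun t _ => ?_
      simp only [dotProduct, Matrix.mulVec, Matrix.vecMulVec, Matrix.of_apply,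
        star_trivial, Finset.mul_sum]
      rw [sq, Finset.sum_mul]
      refine Finset.sum_congr rfl fun i _ => ?_
      rw [Finset.mul_sum]
      refine Finset.sum_congr rfl fun i' _ => ?_
      ring
    rw [hqu] at hpos
    obtain ⟨t₀, -, ht₀⟩ : ∃ t ∈ Finset.univ, (0:ℝ) < (∑ i, w t i * u i) ^ 2 := by
      by_contra h
      push_neg at h
      have : ∑ t : Fin N, (∑ i, w t i * u i) ^ 2 ≤ 0 :=
        Finset.sum_nonpos fun t ht => h t ht
      linarith
    have hc : (∑ i, w t₀ i * u i) ≠ 0 := by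
      intro h
      rw [h] at ht₀
      simp at ht₀
    set v : Fin n → ℝ := fun j => ∑ i, w t₀ i * x (i, j) with hv
    have hv0 : v ≠ 0 := by
      intro h
      exact hc (by simpa [hv, hu] using congrFun h j₀)
    have hvpos := (hP t₀).dotProduct_mulVec_pos hv0
    simp only [star_trivial] at hvpos
    have hlt : 0 < x ⬝ᵥ (Matrix.kroneckerMap (· * ·) (Matrix.vecMulVec (w t₀) (w t₀)) (P t₀)) *ᵥ x := by
      rw [hterm t₀]; exact hvpos
    have : 0 < ∑ t : Fin N,
        x ⬝ᵥ (Matrix.kroneckerMap (· * ·) (Matrix.vecMulVec (w t) (w t)) (P t)) *ᵥ x :=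
      Finset.sum_pos' (fun t _ => hnn t) ⟨t₀, Finset.mem_univ t₀, hlt⟩
    rw [star_trivial, dot_sum_mulVec]
    exact this
end
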